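/- Let δ > 0. There exists σ₀ > 0, depending only on δ, such that the following holds. Let X be a δ-hyperbolic metric space in which, for all x,x' ∈ X and every l > 0, there is a (1,l)-quasi-geodesic joining x to x'; let G act on X by isometries, let σ ≥ σ₀, let R be a σ-rotation family, and let (W,N,V) be an extended windmill with W nonempty and L = ⟨N ∪ K_V⟩. Set A = { v ∈ v(R)∖V : d(v,W) ≤ 3σ/10 }, assume A is nonempty, let S = Hull(W ∪ A), and let W' be the (σ/10)-neighborhood of K_A·S. Then the set K_A·S is 224δ-quasi-convex and W' is 2δ-quasi-convex. -/

import Mathlib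

open Metric

universe u v

/-- The Gromov product `(y,z)_x = (d(y,x)+d(z,x)-d(y,z))/2`. -/
noncomputable def gp {X : Type u} [MetricSpace X] (x y z : X) : ℝ :=
  (dist y x + dist z x - dist y z) / 2

/-- `X` is `δ`-hyperbolic: the four point inequality. -/
def IsHyp (X : Type u) [MetricSpace X] (δ : ℝ) : Prop :=
  ∀ x y z t : X, min (gp t x y) (gp t y z) - δ ≤ gp t x z

/-- `γ` restricted to `[a,b]` is a `(1,l)`-quasi-geodesic. -/
def IsQG {X : Type u} [MetricSpace X] (l a b : ℝ) (γ : ℝ → X) : Prop :=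
  ∀ t ∈ Set.Icc a b, ∀ t' ∈ Set.Icc a b,
    dist (γ t) (γ t') ≤ |t - t'| ∧ |t - t'| ≤ dist (γ t) (γ t') + l

/-- Any two points of `X` are joined by a `(1,l)`-quasi-geodesic, for every `l > 0`. -/
def QGSpace (X : Type u) [MetricSpace X] : Prop :=
  ∀ x x' : X, ∀ l : ℝ, 0 < l →
    ∃ a b : ℝ, ∃ γ : ℝ → X, a ≤ b ∧ IsQG l a b γ ∧ γ a = x ∧ γ b = x'

/-- `Y` is `α`-quasi-convex. -/
def QConvex {X : Type u} [MetricSpace X] (α : ℝ) (Y : Set X) : Prop :=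
  ∀ x : X, ∀ y ∈ Y, ∀ y' ∈ Y, infDist x Y ≤ gp x y y' + α

/-- The hull of `Y`: the union of the images of all `(1,δ)`-quasi-geodesics defined on
compact intervals whose two endpoints lie in `Y`. -/
def hull {X : Type u} [MetricSpace X] (δ : ℝ) (Y : Set X) : Set X :=
  { z | ∃ a b : ℝ, ∃ γ : ℝ → X, a ≤ b ∧ IsQG δ a b γ ∧ γ a ∈ Y ∧ γ b ∈ Y ∧
      z ∈ γ '' Set.Icc a b }

/-- The `r`-neighborhood of a subset. -/
def nbhd {X : Type u} [MetricSpace X] (r : ℝ) (Z : Set X) : Set X :=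
  { x | infDist x Z ≤ r }

/-- A `σ`-rotation family: a nonempty set of pairs (rotation subgroup, apex). -/
def IsRotFam {X : Type u} [MetricSpace X] {G : Type v} [Group G] [MulAction G X]
    (σ : ℝ) (R : Set (Subgroup G × X)) : Prop :=
  R.Nonempty ∧
  (∀ p ∈ R, ∀ x : X, dist x p.2 ≤ σ / 10 → ∀ h ∈ p.1, h ≠ 1 →
      dist (h • x) x = 2 * dist p.2 x) ∧
  (∀ p ∈ R, ∀ q ∈ R, p ≠ q → σ ≤ dist p.2 q.2) ∧
  (∀ g : G, ∀ p ∈ R, (Subgroup.map (MulAut.conj g).toMonoidHom p.1, g • p.2) ∈ R)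

/-- The set of apices of a rotation family. -/
def apices {G : Type v} {X : Type u} [Group G] (R : Set (Subgroup G × X)) : Set X :=
  Prod.snd '' R

/-- The subgroup `K_Y` generated by all rotation subgroups whose apex lies in `Y`. -/
def rotSub {G : Type v} {X : Type u} [Group G] (R : Set (Subgroup G × X)) (Y : Set X) :
    Subgroup G :=
  ⨆ p ∈ { q ∈ R | q.2 ∈ Y }, p.1

/-- The orbit set `P • Z`. -/
def orbSet {G : Type v} {X : Type u} [Group G] [MulAction G X] (P : Subgroup G)
    (Z : Set X) : Set X :=
  { x | ∃ g ∈ P, ∃ z ∈ Z, x = g • z }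

/-- An extended windmill `(W, N, V)` for the rotation family `R`. -/
def IsExtWindmill {X : Type u} [MetricSpace X] {G : Type v} [Group G] [MulAction G X]
    (δ : ℝ) (R : Set (Subgroup G × X)) (W : Set X) (N : Subgroup G) (V : Set X) : Prop :=
  V ⊆ apices R ∧
  QConvex (2 * δ) W ∧
  (∀ g ∈ N ⊔ rotSub R V, ∀ w ∈ W, g • w ∈ W) ∧
  (∀ g ∈ N ⊔ rotSub R V, ∀ v ∈ V, g • v ∈ V) ∧
  (∀ p ∈ R, p.2 ∉ V → ∀ h ∈ p.1, h ≠ 1 → ∀ x ∈ W, ∀ x' ∈ W,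
      gp p.2 x (h • x') ≤ 100 * δ) ∧
  (∀ p ∈ R, p.2 ∉ V → ∀ g ∈ N ⊔ rotSub R V, g • p.2 = p.2 → g = 1)

section gpLemmas
variable {X : Type u} [MetricSpace X]

lemma gp_nonneg (x y z : X) : 0 ≤ gp x y z := by
  have h := dist_triangle y x z
  have h2 : dist x z = dist z x := dist_comm x z
  unfold gp; linarith

lemma gp_comm (x y z : X) : gp x y z = gp x z y := by
  unfold gp; rw [dist_comm y z]; ring

lemma gp_le_dist (x y z : X) : gp x y z ≤ dist x z := by
  have h := dist_triangle y z x
  have h2 : dist x z = dist z x := dist_comm x z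
  unfold gp; linarith

lemma gp_ge (x y z : X) : dist x y - dist y z ≤ gp x y z := by
  have h := dist_triangle x z y
  have h2 : dist x y = dist y x := dist_comm x y
  have h3 : dist x z = dist z x := dist_comm x z
  have h4 : dist z y = dist y z := dist_comm z y
  unfold gp; linarith

lemma gp_self (x z : X) : gp x x z = 0 := by
  unfold gp; rw [dist_comm x z]; simp

lemma gp_self2 (x y : X) : gp x y x = 0 := by
  rw [gp_comm]; exact gp_self x y

lemma gp_id1 (x y z : X) : gp x z y + gp y z x = dist x y := by
  unfold gp
  rw [dist_comm z x, dist_comm y x, dist_comm z y]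
  ring

lemma gp_id2 (x a b c : X) : gp x a c + gp x c b = gp x a b + dist x c - gp c a b := by
  unfold gp
  rw [dist_comm x c, dist_comm c b]
  ring

end gpLemmas

section hypLemmas
variable {X : Type u} [MetricSpace X] {δ : ℝ}

/-- z between y1 y2 ⇒ gp x y1 y2 ≤ gp x y1 z + e -/
lemma between1 {e : ℝ} {z y1 y2 : X} (x : X) (hz : gp z y1 y2 ≤ e) :
    gp x y1 y2 ≤ gp x y1 z + e := by
  have h1 : dist y2 x ≤ dist y2 z + dist z x := dist_triangle y2 z x
  have h2 : dist y1 z + dist y2 z - dist y1 y2 ≤ 2 * e := by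
    unfold gp at hz; linarith
  have h3 : dist z y2 = dist y2 z := dist_comm z y2
  unfold gp; linarith

/-- z between y1 y2 ⇒ gp v z q ≤ max over endpoints + e + 2δ -/
lemma between_max (hyp : IsHyp X δ) {e : ℝ} (he : 0 ≤ e) (hd : 0 ≤ δ)
    {z y1 y2 : X} (hz : gp z y1 y2 ≤ e) (v q : X) :
    gp v z q ≤ max (gp v y1 q) (gp v y2 q) + e + 2 * δ := by
  have hid : gp v y1 z + gp v z y2 = gp v y1 y2 + dist v z - gp z y1 y2 := gp_id2 v y1 y2 z
  have hh : min (gp v y1 z) (gp v z y2) - δ ≤ gp v y1 y2 := hyp y1 z y2 v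
  have hq : gp v z q ≤ dist v z := by rw [gp_comm]; exact gp_le_dist v q z
  rcases le_total (gp v y1 z) (gp v z y2) with hmm | hmm
  · rw [min_eq_left hmm] at hh
    have hbig : dist v z - e - δ ≤ gp v z y2 := by linarith
    have hh2 : min (gp v y2 z) (gp v z q) - δ ≤ gp v y2 q := hyp y2 z q v
    have hcm : gp v y2 z = gp v z y2 := gp_comm v y2 z
    have : gp v z q - e - δ ≤ min (gp v y2 z) (gp v z q) := by
      rcases min_cases (gp v y2 z) (gp v z q) with ⟨hmin, _⟩ | ⟨hmin, _⟩ <;> rw [hmin] <;> linarith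
    have := le_max_right (gp v y1 q) (gp v y2 q)
    linarith
  · rw [min_eq_right hmm] at hh
    have hbig : dist v z - e - δ ≤ gp v y1 z := by linarith
    have hh2 : min (gp v y1 z) (gp v z q) - δ ≤ gp v y1 q := hyp y1 z q v
    have : gp v z q - e - δ ≤ min (gp v y1 z) (gp v z q) := by
      rcases min_cases (gp v y1 z) (gp v z q) with ⟨hmin, _⟩ | ⟨hmin, _⟩ <;> rw [hmin] <;> linarith
    have := le_max_left (gp v y1 q) (gp v y2 q)
    linarith

/-- projection to a (1,l)-quasi-geodesic -/
lemma proj_qg (hyp : IsHyp X δ) {l a b : ℝ} (hl : 0 ≤ l) (hab : a ≤ b)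
    {γ : ℝ → X} (hγ : IsQG l a b γ) (x : X) :
    ∃ t ∈ Set.Icc a b, dist x (γ t) ≤ gp x (γ a) (γ b) + 2 * l + 2 * δ := by
  set v := γ a with hv
  set w := γ b with hw
  have hmema : a ∈ Set.Icc a b := ⟨le_refl a, hab⟩
  have hmemb : b ∈ Set.Icc a b := ⟨hab, le_refl b⟩
  have hdvw : dist v w ≤ b - a := by
    have := (hγ a hmema b hmemb).1
    rwa [abs_of_nonpos (by linarith), neg_sub] at this
  set t := a + gp v x w with ht
  have h0 : 0 ≤ gp v x w := gp_nonneg v x w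
  have h1 : gp v x w ≤ dist v w := gp_le_dist v x w
  have hmemt : t ∈ Set.Icc a b := ⟨by linarith, by linarith⟩
  refine ⟨t, hmemt, ?_⟩
  set p := γ t with hp
  have hqg1 := hγ a hmema t hmemt
  have hqg2 := hγ t hmemt b hmemb
  have habs1 : |a - t| = gp v x w := by rw [ht]; rw [abs_of_nonpos (by linarith)]; ring
  have habs2 : |t - b| = b - t := by rw [abs_of_nonpos (by linarith [hmemt.2])]; ring
  have hd1 : dist v p ≤ gp v x w := by rw [← habs1]; exact hqg1.1
  have hd1' : gp v x w - l ≤ dist v p := by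
    have := hqg1.2; rw [habs1] at this; linarith
  have hd2 : dist p w ≤ b - t := by rw [← habs2]; exact hqg2.1
  have hd2' : b - t - l ≤ dist p w := by
    have := hqg2.2; rw [habs2] at this; linarith
  have hbt : b - t ≤ dist v w + l - gp v x w := by
    have : b - a ≤ dist v w + l := by
      have := (hγ a hmema b hmemb).2
      rwa [abs_of_nonpos (by linarith), neg_sub] at this
    rw [ht]; linarith
  have hgp : gp p v w ≤ l / 2 := by
    have e1 : dist v p = dist p v := dist_comm v p
    have e2 : dist w p = dist p w := dist_comm w p
    unfold gp; linarith
  have hbt2 : dist v w - gp v x w ≤ b - t := by rw [ht]; linarith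
  have e6 : dist v w = dist w v := dist_comm v w
  have hmin : min (gp p v x) (gp p x w) - δ ≤ gp p v w := hyp v x w p
  rcases min_cases (gp p v x) (gp p x w) with ⟨hmin2, _⟩ | ⟨hmin2, _⟩
  · rw [hmin2] at hmin
    have e1 : gp p x v = gp p v x := gp_comm p x v
    have e2 : dist v p = dist p v := dist_comm v p
    have e3 : dist x p = dist p x := dist_comm x p
    have e4 : dist x v = dist v x := dist_comm x v
    have e5 : dist x w = dist w x := dist_comm x w
    unfold gp at *
    linarith
  · rw [hmin2] at hmin
    have e2 : dist w p = dist p w := dist_comm w p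
    have e3 : dist x p = dist p x := dist_comm x p
    have e4 : dist x v = dist v x := dist_comm x v
    have e5 : dist x w = dist w x := dist_comm x w
    unfold gp at *
    linarith

end hypLemmas

section chainLemmas
variable {X : Type u} [MetricSpace X] {δ : ℝ}

lemma ginv (hδ : 0 < δ) (hyp : IsHyp X δ) {ε L : ℝ} (hε : 0 ≤ ε) (hL : 2 * ε + 10 * δ ≤ L)
    (m : ℕ) (u : ℕ → X)
    (hang : ∀ k, 1 ≤ k → k + 1 ≤ m → gp (u k) (u (k - 1)) (u (k + 1)) ≤ ε)
    (hlen : ∀ k, 1 ≤ k → k + 2 ≤ m → L ≤ dist (u k) (u (k + 1))) :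
    ∀ j, j + 1 ≤ m → gp (u j) (u 0) (u (j + 1)) ≤ ε + δ := by
  intro j
  induction j with
  | zero => intro _; rw [gp_self]; linarith
  | succ i ih =>
    intro hi1
    match i, ih with
    | 0, _ =>
      have h := hang 1 (le_refl 1) hi1
      simp only [Nat.sub_self] at h
      linarith
    | (i + 1), ih =>
      have ih2 := ih (by omega)
      have hl := hlen (i + 1) (by omega) (by omega)
      have hid : gp (u (i + 1)) (u 0) (u (i + 2)) + gp (u (i + 2)) (u 0) (u (i + 1))
          = dist (u (i + 1)) (u (i + 2)) := gp_id1 (u (i + 1)) (u (i + 2)) (u 0)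
      have ha := hang (i + 2) (by omega) (by omega)
      simp only [show i + 2 - 1 = i + 1 by omega] at ha
      have hh : min (gp (u (i + 2)) (u (i + 1)) (u 0)) (gp (u (i + 2)) (u 0) (u (i + 1 + 2)))
          - δ ≤ gp (u (i + 2)) (u (i + 1)) (u (i + 1 + 2)) :=
        hyp (u (i + 1)) (u 0) (u (i + 1 + 2)) (u (i + 2))
      have hc : gp (u (i + 2)) (u (i + 1)) (u 0) = gp (u (i + 2)) (u 0) (u (i + 1)) :=
        gp_comm _ _ _
      have he3 : (i + 1) + 2 = (i + 2) + 1 := by omega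
      rw [he3] at hh ⊢
      have ha' : gp (u (i + 2)) (u (i + 1)) (u (i + 2 + 1)) ≤ ε := by simpa using ha
      rcases min_cases (gp (u (i + 2)) (u (i + 1)) (u 0)) (gp (u (i + 2)) (u 0) (u (i + 2 + 1))) with
        ⟨hmin, _⟩ | ⟨hmin, _⟩ <;> rw [hmin] at hh <;> linarith

lemma chain_lemma (hδ : 0 < δ) (hyp : IsHyp X δ) {ε L : ℝ} (hε : 0 ≤ ε)
    (hL : 2 * ε + 10 * δ ≤ L) (m : ℕ) (hm : 1 ≤ m) (u : ℕ → X)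
    (hang : ∀ k, 1 ≤ k → k + 1 ≤ m → gp (u k) (u (k - 1)) (u (k + 1)) ≤ ε)
    (hlen : ∀ k, 1 ≤ k → k + 2 ≤ m → L ≤ dist (u k) (u (k + 1))) (x : X) :
    ∃ k, k + 1 ≤ m ∧ gp x (u k) (u (k + 1)) ≤ gp x (u 0) (u m) + ε + 5 * δ := by
  classical
  have G := ginv hδ hyp hε hL m u hang hlen
  set u' : ℕ → X := fun j => u (m - j) with hu'
  have hang' : ∀ k, 1 ≤ k → k + 1 ≤ m → gp (u' k) (u' (k - 1)) (u' (k + 1)) ≤ ε := by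
    intro k hk1 hk2
    have e1 : m - (k - 1) = (m - k) + 1 := by omega
    have e2 : m - (k + 1) = (m - k) - 1 := by omega
    have this := hang (m - k) (by omega) (by omega)
    simp only [hu', e1, e2]
    rw [gp_comm]
    exact this
  have hlen' : ∀ k, 1 ≤ k → k + 2 ≤ m → L ≤ dist (u' k) (u' (k + 1)) := by
    intro k hk1 hk2
    have this := hlen (m - k - 1) (by omega) (by omega)
    have e : m - k - 1 + 1 = m - k := by omega
    rw [e] at this
    simp only [hu']
    rw [dist_comm]
    have e2 : m - (k + 1) = m - k - 1 := by omega
    rw [e2]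
    exact this
  have G' := ginv hδ hyp hε hL m u' hang' hlen'
  have Grev : ∀ i, i + 1 ≤ m → gp (u (i + 1)) (u m) (u i) ≤ ε + δ := by
    intro i hi
    have := G' (m - i - 1) (by omega)
    simp only [hu'] at this
    have e1 : m - (m - i - 1) = i + 1 := by omega
    have e2 : m - 0 = m := by omega
    have e3 : m - (m - i - 1 + 1) = i := by omega
    rw [e1, e2, e3] at this
    exact this
  have taut : ∀ i, 1 ≤ i → i + 1 ≤ m → gp (u i) (u 0) (u m) ≤ ε + 2 * δ := by
    intro i hi1 hi2
    have a := G i hi2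
    by_cases hieq : i + 1 = m
    · rw [hieq] at a; linarith
    · have hi3 : i + 2 ≤ m := by omega
      have b := Grev i (by omega)
      have hid : gp (u i) (u m) (u (i + 1)) + gp (u (i + 1)) (u m) (u i)
          = dist (u i) (u (i + 1)) := gp_id1 (u i) (u (i + 1)) (u m)
      have hl := hlen i hi1 hi3
      have hh : min (gp (u i) (u 0) (u m)) (gp (u i) (u m) (u (i + 1))) - δ
          ≤ gp (u i) (u 0) (u (i + 1)) := hyp (u 0) (u m) (u (i + 1)) (u i)
      rcases min_cases (gp (u i) (u 0) (u m)) (gp (u i) (u m) (u (i + 1))) with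
        ⟨hmin, _⟩ | ⟨hmin, _⟩ <;> rw [hmin] at hh <;> linarith
  set μ := gp x (u 0) (u m) with hμ
  set P : ℕ → Prop := fun k => gp x (u k) (u m) ≤ μ + δ with hP
  have hP0 : P 0 := by simp only [hP]; linarith
  set j := Nat.findGreatest P (m - 1) with hj
  have hPj : P j := Nat.findGreatest_spec (Nat.zero_le _) hP0
  have hjle : j ≤ m - 1 := Nat.findGreatest_le (m - 1)
  by_cases hjm : j + 1 = m
  · refine ⟨j, by omega, ?_⟩
    have : gp x (u j) (u (j + 1)) ≤ μ + δ := by rw [hjm]; exact hPj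
    linarith
  · have hj1 : j + 1 ≤ m - 1 := by omega
    have hnP : ¬ P (j + 1) := Nat.findGreatest_is_greatest (by omega) hj1
    have hF1 : μ + δ < gp x (u (j + 1)) (u m) := by
      simp only [hP] at hnP; linarith [not_le.mp hnP]
    have h5 : min (gp x (u j) (u (j + 1))) (gp x (u (j + 1)) (u m)) - δ
        ≤ gp x (u j) (u m) := hyp (u j) (u (j + 1)) (u m) x
    rcases min_cases (gp x (u j) (u (j + 1))) (gp x (u (j + 1)) (u m)) with
      ⟨hmin, _⟩ | ⟨hmin, _⟩
    · rw [hmin] at h5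
      refine ⟨j, by omega, ?_⟩
      have : gp x (u j) (u m) ≤ μ + δ := hPj
      linarith
    · rw [hmin] at h5
      have hF2 : gp x (u (j + 1)) (u m) ≤ μ + 2 * δ := by
        have : gp x (u j) (u m) ≤ μ + δ := hPj
        linarith
      have h6 : min (gp x (u 0) (u (j + 1))) (gp x (u (j + 1)) (u m)) - δ
          ≤ gp x (u 0) (u m) := hyp (u 0) (u (j + 1)) (u m) x
      have hg' : gp x (u 0) (u (j + 1)) ≤ μ + δ := by
        rcases min_cases (gp x (u 0) (u (j + 1))) (gp x (u (j + 1)) (u m)) with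
          ⟨hmin2, _⟩ | ⟨hmin2, _⟩ <;> rw [hmin2] at h6 <;> linarith
      have ht := taut (j + 1) (by omega) (by omega)
      have hid : gp x (u 0) (u (j + 1)) + gp x (u (j + 1)) (u m)
          = gp x (u 0) (u m) + dist x (u (j + 1)) - gp (u (j + 1)) (u 0) (u m) :=
        gp_id2 x (u 0) (u m) (u (j + 1))
      have hdx : dist x (u (j + 1)) ≤ μ + ε + 5 * δ := by linarith
      refine ⟨j, by omega, ?_⟩
      calc gp x (u j) (u (j + 1)) ≤ dist x (u (j + 1)) := gp_le_dist _ _ _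
        _ ≤ μ + ε + 5 * δ := hdx

end chainLemmas

lemma subset_hull {X : Type u} [MetricSpace X] {δ : ℝ} (hδ : 0 ≤ δ) (Y : Set X) :
    Y ⊆ hull δ Y := by
  intro z hz
  refine ⟨0, 0, fun _ => z, le_refl 0, ?_, hz, hz, ⟨0, ⟨le_refl 0, le_refl 0⟩, rfl⟩⟩
  intro t ht t' ht'
  have h1 : t = 0 := le_antisymm ht.2 ht.1
  have h2 : t' = 0 := le_antisymm ht'.2 ht'.1
  subst h1; subst h2
  simp only [dist_self, sub_zero, abs_zero]
  exact ⟨le_refl 0, by linarith⟩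

/-- `K_A · S` is `224δ`-quasi-convex and `W'` is `2δ`-quasi-convex. -/
theorem windmill_W'_quasi_convex (δ : ℝ) (hδ : 0 < δ) :
    ∃ σ₀ : ℝ, 0 < σ₀ ∧
      ∀ (X : Type u) [MetricSpace X] (G : Type v) [Group G] [MulAction G X],
        (∀ g : G, Isometry fun x : X => g • x) →
        IsHyp X δ → QGSpace X →
        ∀ σ : ℝ, σ₀ ≤ σ → ∀ R : Set (Subgroup G × X), IsRotFam σ R →
          ∀ (W : Set X) (N : Subgroup G) (V : Set X),
            W.Nonempty → IsExtWindmill δ R W N V →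
            ∀ A : Set X,
              A = { v | v ∈ apices R ∧ v ∉ V ∧ infDist v W ≤ 3 * σ / 10 } →
              A.Nonempty →
              ∀ S : Set X, S = hull δ (W ∪ A) →
                ∀ W' : Set X, W' = nbhd (σ / 10) (orbSet (rotSub R A) S) →
                  QConvex (224 * δ) (orbSet (rotSub R A) S) ∧ QConvex (2 * δ) W' := by
  classical
  refine ⟨3000 * δ, by linarith, ?_⟩
  intro X _ G _ _ hiso hyp qgs σ hσδ R hRot W N V hWne hwind A hA hAne S hS W' hW'
  obtain ⟨hRne, hR1, hR2, hR3⟩ := hRot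
  obtain ⟨hVap, hWqc, hWinv, hVinv, hW3, hW4⟩ := hwind
  have hσ0 : 0 < σ := by linarith
  -- basic action facts
  have hds : ∀ (g : G) (a b : X), dist (g • a) (g • b) = dist a b := fun g a b =>
    (hiso g).dist_eq a b
  have hgs : ∀ (g : G) (a b c : X), gp (g • a) (g • b) (g • c) = gp a b c := by
    intro g a b c; unfold gp; rw [hds, hds, hds]
  have hfix : ∀ p ∈ R, ∀ h ∈ p.1, h • p.2 = p.2 := by
    intro p hp h hh
    by_cases h1 : h = 1
    · rw [h1, one_smul]
    · have := hR1 p hp p.2 (by rw [dist_self]; positivity) h hh h1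
      rw [dist_self, mul_zero] at this
      exact dist_eq_zero.mp this
  have hAmem : ∀ v ∈ A, v ∈ apices R ∧ v ∉ V ∧ infDist v W ≤ 3 * σ / 10 := by
    intro v hv; rw [hA] at hv; exact hv
  -- apex separation
  have hsep : ∀ p ∈ R, ∀ q ∈ R, p.2 ≠ q.2 → σ ≤ dist p.2 q.2 := by
    intro p hp q hq hne
    exact hR2 p hp q hq (fun h => hne (by rw [h]))
  have hWS : W ⊆ S := by
    rw [hS]; exact fun w hw => subset_hull (le_of_lt hδ) _ (Set.mem_union_left _ hw)
  have hAS : A ⊆ S := by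
    rw [hS]; exact fun v hv => subset_hull (le_of_lt hδ) _ (Set.mem_union_right _ hv)
  have hSne : S.Nonempty := hWne.mono hWS
  set K := rotSub R A with hK
  set T := orbSet K S with hT
  have hKmem : ∀ p, p ∈ R → p.2 ∈ A → ∀ h ∈ p.1, h ∈ K := by
    intro p hp hpA h hh
    have : p.1 ≤ K := le_iSup₂ (f := fun (q : Subgroup G × X) (_ : q ∈ {q ∈ R | q.2 ∈ A}) => q.1)
      p ⟨hp, hpA⟩
    exact this hh
  have hTS : S ⊆ T := fun s hs => ⟨1, one_mem K, s, hs, (one_smul G s).symm⟩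
  have hTne : T.Nonempty := hSne.mono hTS
  have hTinv : ∀ c ∈ K, ∀ t ∈ T, c • t ∈ T := by
    rintro c hc t ⟨g, hg, s, hs, rfl⟩
    exact ⟨c * g, mul_mem hc hg, s, hs, (mul_smul c g s).symm⟩
  have hinfT : ∀ c ∈ K, ∀ x : X, infDist (c • x) T = infDist x T := by
    have key : ∀ c ∈ K, ∀ x : X, infDist (c • x) T ≤ infDist x T := by
      intro c hc x
      apply le_of_forall_pos_le_add
      intro ε hε
      obtain ⟨t, htT, hxt⟩ := (infDist_lt_iff hTne).mp
        (show infDist x T < infDist x T + ε by linarith)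
      calc infDist (c • x) T ≤ dist (c • x) (c • t) := infDist_le_dist_of_mem (hTinv c hc t htT)
        _ = dist x t := hds c x t
        _ ≤ infDist x T + ε := le_of_lt hxt
    intro c hc x
    refine le_antisymm (key c hc x) ?_
    have := key c⁻¹ (inv_mem hc) (c • x)
    rwa [inv_smul_smul] at this
  -- distance to S bounded via Gromov product of hull endpoints
  have hHull4 : ∀ a ∈ W ∪ A, ∀ b ∈ W ∪ A, ∀ x : X, infDist x S ≤ gp x a b + 4 * δ := by
    intro a ha b hb x
    obtain ⟨a', b', γ, hab, hγ, hγa, hγb⟩ := qgs a b δ hδ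
    obtain ⟨t, htmem, hdist⟩ := proj_qg hyp (le_of_lt hδ) hab hγ x
    have hγtS : γ t ∈ S := by
      rw [hS]
      exact ⟨a', b', γ, hab, hγ, by rw [hγa]; exact ha, by rw [hγb]; exact hb,
        ⟨t, htmem, rfl⟩⟩
    calc infDist x S ≤ dist x (γ t) := infDist_le_dist_of_mem hγtS
      _ ≤ gp x (γ a') (γ b') + 2 * δ + 2 * δ := hdist
      _ = gp x a b + 4 * δ := by rw [hγa, hγb]; ring
  -- endpoints of points in S
  have hSend : ∀ z ∈ S, ∃ y1 ∈ W ∪ A, ∃ y2 ∈ W ∪ A, gp z y1 y2 ≤ δ / 2 := by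
    intro z hz
    rw [hS] at hz
    obtain ⟨a, b, γ, hab, hγ, h1, h2, t, ht, rfl⟩ := hz
    refine ⟨γ a, h1, γ b, h2, ?_⟩
    have hmema : a ∈ Set.Icc a b := ⟨le_refl a, hab⟩
    have hmemb : b ∈ Set.Icc a b := ⟨hab, le_refl b⟩
    have hq1 : dist (γ a) (γ t) ≤ t - a := by
      have := (hγ a hmema t ht).1
      rwa [abs_of_nonpos (by linarith [ht.1]), neg_sub] at this
    have hq2 : dist (γ t) (γ b) ≤ b - t := by
      have := (hγ t ht b hmemb).1
      rwa [abs_of_nonpos (by linarith [ht.2]), neg_sub] at this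
    have hq3 : b - a ≤ dist (γ a) (γ b) + δ := by
      have := (hγ a hmema b hmemb).2
      rwa [abs_of_nonpos (by linarith), neg_sub] at this
    have e1 : dist (γ b) (γ t) = dist (γ t) (γ b) := dist_comm _ _
    unfold gp
    linarith
  -- S is 7δ-quasi-convex
  have hSqc : ∀ x : X, ∀ z ∈ S, ∀ z' ∈ S, infDist x S ≤ gp x z z' + 7 * δ := by
    intro x z hz z' hz'
    obtain ⟨y1, hy1, y2, hy2, hgz⟩ := hSend z hz
    obtain ⟨y3, hy3, y4, hy4, hgz'⟩ := hSend z' hz'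
    have h1 : gp x y1 y2 ≤ gp x y1 z + δ / 2 := between1 x hgz
    have h1' : gp x z y1 = gp x y1 z := gp_comm x z y1
    have h2 : gp x y3 y4 ≤ gp x y3 z' + δ / 2 := between1 x hgz'
    have h3 : min (gp x z y1) (gp x y1 y3) - δ ≤ gp x z y3 := hyp z y1 y3 x
    have h4 : min (gp x z y3) (gp x y3 z') - δ ≤ gp x z z' := hyp z y3 z' x
    have B12 := hHull4 y1 hy1 y2 hy2 x
    have B13 := hHull4 y1 hy1 y3 hy3 x
    have B34 := hHull4 y3 hy3 y4 hy4 x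
    rcases min_cases (gp x z y3) (gp x y3 z') with ⟨hm4, _⟩ | ⟨hm4, _⟩
    · rw [hm4] at h4
      rcases min_cases (gp x z y1) (gp x y1 y3) with ⟨hm3, _⟩ | ⟨hm3, _⟩
      · rw [hm3] at h3; linarith
      · rw [hm3] at h3; linarith
    · rw [hm4] at h4; linarith
  -- W3 extended to S
  have hW3S : ∀ p, p ∈ R → p.2 ∈ A → ∀ h ∈ p.1, h ≠ 1 →
      ∀ z ∈ S, ∀ z' ∈ S, gp p.2 z (h • z') ≤ 110 * δ := by
    intro p hp hpA h hh hne z hz z' hz'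
    set v := p.2 with hv
    have hpV : p.2 ∉ V := (hAmem _ hpA).2.1
    have hW3' : ∀ w ∈ W, ∀ w'' ∈ W, gp v w (h • w'') ≤ 100 * δ := by
      intro w hw w'' hw''
      exact hW3 p hp hpV h hh hne w hw w'' hw''
    -- nearby W point of an apex, and apex separation
    have hnear : ∀ v'' ∈ A, ∃ w ∈ W, dist v'' w < 3 * σ / 10 + δ := by
      intro v'' hv''
      exact (infDist_lt_iff hWne).mp (lt_of_le_of_lt (hAmem _ hv'').2.2 (by linarith))
    have hsepA : ∀ v'' ∈ A, v'' ≠ v → σ ≤ dist v v'' := by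
      intro v'' hv'' hne'
      obtain ⟨q, hq, hq2⟩ := (hAmem _ hv'').1
      rw [← hq2]
      exact hsep p hp q hq (fun hc => hne' (by rw [← hq2, ← hc, ← hv]))
    have core1 : ∀ y ∈ W ∪ A, ∀ w'' ∈ W, gp v y (h • w'') ≤ 101 * δ := by
      intro y hy w'' hw''
      rcases hy with hyW | hyA
      · linarith [hW3' y hyW w'' hw'']
      · by_cases hyv : y = v
        · rw [hyv, gp_self]; positivity
        · obtain ⟨w, hw, hwd⟩ := hnear y hyA
          have hbig : σ - (3 * σ / 10 + δ) ≤ gp v w y := by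
            have := gp_ge v y w
            have h1 : gp v y w = gp v w y := gp_comm v y w
            have h2 := hsepA y hyA hyv
            have h3 : dist y w = dist v y - (dist v y - dist y w) := by ring
            linarith
          have hmin : min (gp v w y) (gp v y (h • w'')) - δ ≤ gp v w (h • w'') :=
            hyp w y (h • w'') v
          have hup := hW3' w hw w'' hw''
          rcases min_cases (gp v w y) (gp v y (h • w'')) with ⟨hm, _⟩ | ⟨hm, _⟩
          · rw [hm] at hmin; linarith
          · rw [hm] at hmin; linarith
    have core2 : ∀ y ∈ W ∪ A, ∀ y' ∈ W ∪ A, gp v y (h • y') ≤ 102 * δ := by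
      intro y hy y' hy'
      rcases hy' with hy'W | hy'A
      · linarith [core1 y hy y' hy'W]
      · by_cases hy'v : y' = v
        · rw [hy'v, hfix p hp h hh, gp_self2]; positivity
        · obtain ⟨w'', hw'', hwd⟩ := hnear y' hy'A
          have hdv : dist v (h • y') = dist v y' := by
            calc dist v (h • y') = dist (h • v) (h • y') := by rw [hfix p hp h hh]
              _ = dist v y' := hds h v y'
          have hdw : dist (h • y') (h • w'') = dist y' w'' := hds h y' w''
          have hbig : σ - (3 * σ / 10 + δ) ≤ gp v (h • y') (h • w'') := by
            have := gp_ge v (h • y') (h • w'')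
            have h2 := hsepA y' hy'A hy'v
            rw [hdv, hdw] at this
            linarith
          have hmin : min (gp v y (h • y')) (gp v (h • y') (h • w'')) - δ ≤ gp v y (h • w'') :=
            hyp y (h • y') (h • w'') v
          have hup := core1 y hy w'' hw''
          rcases min_cases (gp v y (h • y')) (gp v (h • y') (h • w'')) with ⟨hm, _⟩ | ⟨hm, _⟩
          · rw [hm] at hmin; linarith
          · rw [hm] at hmin; linarith
    obtain ⟨y1, hy1, y2, hy2, hgz⟩ := hSend z hz
    obtain ⟨y3, hy3, y4, hy4, hgz'⟩ := hSend z' hz'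
    have hgz'' : gp (h • z') (h • y3) (h • y4) ≤ δ / 2 := by rw [hgs]; exact hgz'
    have stepA : ∀ y ∈ W ∪ A, gp v y (h • z') ≤ 105 * δ := by
      intro y hy
      have hbm := between_max hyp (by positivity : (0:ℝ) ≤ δ / 2) (le_of_lt hδ) hgz'' v y
      have hc : gp v y (h • z') = gp v (h • z') y := gp_comm v y (h • z')
      have hc3 : gp v (h • y3) y = gp v y (h • y3) := gp_comm _ _ _
      have hc4 : gp v (h • y4) y = gp v y (h • y4) := gp_comm _ _ _
      have hmax : max (gp v (h • y3) y) (gp v (h • y4) y) ≤ 102 * δ := by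
        apply max_le
        · rw [hc3]; exact core2 y hy y3 hy3
        · rw [hc4]; exact core2 y hy y4 hy4
      linarith
    have hbm := between_max hyp (by positivity : (0:ℝ) ≤ δ / 2) (le_of_lt hδ) hgz v (h • z')
    have hmax : max (gp v y1 (h • z')) (gp v y2 (h • z')) ≤ 105 * δ :=
      max_le (stepA y1 hy1) (stepA y2 hy2)
    linarith
  -- one-step bound via translation into S
  have hstep : ∀ c ∈ K, ∀ P Q : X, c • P ∈ S → c • Q ∈ S → ∀ x : X,
      infDist x T ≤ gp x P Q + 7 * δ := by
    intro c hc P Q hP hQ x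
    calc infDist x T = infDist (c • x) T := (hinfT c hc x).symm
      _ ≤ infDist (c • x) S := infDist_le_infDist_of_subset hTS hSne
      _ ≤ gp (c • x) (c • P) (c • Q) + 7 * δ := hSqc (c • x) (c • P) hP (c • Q) hQ
      _ = gp x P Q + 7 * δ := by rw [hgs]
  -- list normalisation
  have hNORM : ∀ lp : List ((Subgroup G × X) × G),
      (∀ e ∈ lp, e.1 ∈ R ∧ e.1.2 ∈ A ∧ e.2 ∈ e.1.1) →
      ∃ lq : List ((Subgroup G × X) × G),
        (∀ e ∈ lq, e.1 ∈ R ∧ e.1.2 ∈ A ∧ e.2 ∈ e.1.1) ∧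
        (∀ e ∈ lq, e.2 ≠ 1) ∧ lq.Chain' (fun e f => e.1 ≠ f.1) ∧
        (lq.map Prod.snd).prod = (lp.map Prod.snd).prod := by
    intro lp
    induction lp with
    | nil => intro _; exact ⟨[], by simp, by simp, List.isChain_nil, rfl⟩
    | cons e l ih =>
      intro hval
      obtain ⟨lq, hq1, hq2, hq3, hq4⟩ := ih (fun f hf => hval f (List.mem_cons_of_mem e hf))
      have hve := hval e (List.mem_cons_self)
      by_cases he : e.2 = 1
      · refine ⟨lq, hq1, hq2, hq3, ?_⟩
        simp only [List.map_cons, List.prod_cons, he, one_mul]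
        exact hq4
      · rcases lq with _ | ⟨f, t⟩
        · refine ⟨[e], by simpa using hve, by simpa using he, List.isChain_singleton e, ?_⟩
          simp only [List.map_cons, List.prod_cons, List.map_nil, List.prod_nil] at hq4 ⊢
          rw [← hq4, mul_one]
        · have hvf := hq1 f (List.mem_cons_self)
          by_cases hef : e.1 = f.1
          · by_cases hm : e.2 * f.2 = 1
            · refine ⟨t, fun x hx => hq1 x (List.mem_cons_of_mem f hx),
                fun x hx => hq2 x (List.mem_cons_of_mem f hx),
                (List.isChain_cons.mp hq3).2, ?_⟩
              simp only [List.map_cons, List.prod_cons] at hq4 ⊢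
              rw [← hq4, ← mul_assoc, hm, one_mul]
            · refine ⟨(e.1, e.2 * f.2) :: t, ?_, ?_, ?_, ?_⟩
              · intro x hx
                rcases List.mem_cons.mp hx with rfl | hx
                · exact ⟨hve.1, hve.2.1, mul_mem hve.2.2 (by rw [hef]; exact hvf.2.2)⟩
                · exact hq1 x (List.mem_cons_of_mem f hx)
              · intro x hx
                rcases List.mem_cons.mp hx with rfl | hx
                · exact hm
                · exact hq2 x (List.mem_cons_of_mem f hx)
              · refine List.isChain_cons.mpr ?_
                refine ⟨?_, (List.isChain_cons.mp hq3).2⟩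
                intro y hy
                have hhd := (List.isChain_cons.mp hq3).1 y hy
                show e.1 ≠ y.1
                rw [hef]; exact hhd
              · simp only [List.map_cons, List.prod_cons] at hq4 ⊢
                rw [mul_assoc, hq4]
          · refine ⟨e :: f :: t, ?_, ?_, List.isChain_cons_cons.mpr ⟨hef, hq3⟩, ?_⟩
            · intro x hx
              rcases List.mem_cons.mp hx with rfl | hx
              · exact hve
              · exact hq1 x hx
            · intro x hx
              rcases List.mem_cons.mp hx with rfl | hx
              · exact he
              · exact hq2 x hx
            · simp only [List.map_cons, List.prod_cons] at hq4 ⊢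
              rw [hq4]
  -- tagging a list of generators
  have hTAG : ∀ l : List G, (∀ y ∈ l, ∃ q : Subgroup G × X, (q ∈ R ∧ q.2 ∈ A) ∧ y ∈ q.1) →
      ∃ lp : List ((Subgroup G × X) × G),
        (∀ e ∈ lp, e.1 ∈ R ∧ e.1.2 ∈ A ∧ e.2 ∈ e.1.1) ∧
        (lp.map Prod.snd).prod = l.prod := by
    intro l
    induction l with
    | nil => intro _; exact ⟨[], by simp, by simp⟩
    | cons y l ih =>
      intro hl
      obtain ⟨q, ⟨hqR, hqA⟩, hyq⟩ := hl y (List.mem_cons_self)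
      obtain ⟨lp, h1, h2⟩ := ih (fun x hx => hl x (List.mem_cons_of_mem y hx))
      refine ⟨(q, y) :: lp, ?_, ?_⟩
      · intro e he
        rcases List.mem_cons.mp he with rfl | he
        · exact ⟨hqR, hqA, hyq⟩
        · exact h1 e he
      · simp only [List.map_cons, List.prod_cons, h2]
  -- every element of K is a product of tagged generators
  have hLIST : ∀ g ∈ K, ∃ l : List G,
      (∀ y ∈ l, ∃ q : Subgroup G × X, (q ∈ R ∧ q.2 ∈ A) ∧ y ∈ q.1) ∧ l.prod = g := by
    intro g hg
    set U : Set G := ⋃ q ∈ {q : Subgroup G × X | q ∈ R ∧ q.2 ∈ A}, (q.1 : Set G) with hU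
    have hle : K ≤ Subgroup.closure U := by
      rw [hK]
      show (⨆ p ∈ { q ∈ R | q.2 ∈ A }, p.1) ≤ Subgroup.closure U
      apply iSup₂_le
      intro q hq x hx
      exact Subgroup.subset_closure (Set.mem_biUnion hq hx)
    have hg2 : g ∈ (Subgroup.closure U).toSubmonoid := hle hg
    rw [Subgroup.closure_toSubmonoid] at hg2
    obtain ⟨l, hl, hlp⟩ := Submonoid.exists_list_of_mem_closure hg2
    refine ⟨l, ?_, hlp⟩
    intro y hy
    rcases hl y hy with hyU | hyU
    · obtain ⟨q, hq, hyq⟩ := Set.mem_iUnion₂.mp hyU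
      exact ⟨q, hq, hyq⟩
    · have h2 : y⁻¹ ∈ U := Set.mem_inv.mp hyU
      obtain ⟨q, hq, hyq⟩ := Set.mem_iUnion₂.mp h2
      exact ⟨q, hq, (Subgroup.inv_mem_iff q.1).mp hyq⟩
  -- the main estimate for reduced words
  have hREDMAIN : ∀ lp : List ((Subgroup G × X) × G),
      (∀ e ∈ lp, e.1 ∈ R ∧ e.1.2 ∈ A ∧ e.2 ∈ e.1.1) →
      (∀ e ∈ lp, e.2 ≠ 1) → lp.Chain' (fun e f => e.1 ≠ f.1) →
      ∀ z ∈ S, ∀ z' ∈ S, ∀ x : X,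
        infDist x T ≤ gp x z ((lp.map Prod.snd).prod • z') + 224 * δ := by
    intro lp hval hred hch z hz z' hz' x
    by_cases hnil : lp = []
    · subst hnil
      simp only [List.map_nil, List.prod_nil, one_smul]
      have h1 := hSqc x z hz z' hz'
      have h2 := infDist_le_infDist_of_subset (x := x) hTS hSne
      linarith
    set n := lp.length with hnl
    have hn : 1 ≤ n := List.length_pos_iff.mpr hnil
    set dflt : (Subgroup G × X) × G := ((⊥, hAne.some), 1) with hdflt
    set lget : ℕ → (Subgroup G × X) × G := fun i => lp.getD i dflt with hlget
    set Pi : ℕ → G := fun i => ((lp.take i).map Prod.snd).prod with hPi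
    have hget : ∀ i, i < n → lget i ∈ lp := by
      intro i hi
      simp only [hlget]
      rw [List.getD_eq_getElem lp dflt hi]
      exact List.getElem_mem hi
    have hchain' : ∀ i, i + 1 < n → (lget i).1 ≠ (lget (i + 1)).1 := by
      intro i hi
      have hc := List.isChain_iff_getElem.mp hch i (by omega)
      have e1 : lget i = lp.get ⟨i, by omega⟩ := by
        simp only [hlget]
        rw [List.getD_eq_getElem lp dflt (by omega)]
        rfl
      have e2 : lget (i + 1) = lp.get ⟨i + 1, by omega⟩ := by
        simp only [hlget]
        rw [List.getD_eq_getElem lp dflt (by omega)]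
        rfl
      rw [e1, e2]
      exact hc
    have hPstep : ∀ i, i < n → Pi (i + 1) = Pi i * (lget i).2 := by
      intro i hi
      have h1 : lp[i]? = some lp[i] := List.getElem?_eq_getElem hi
      have h2 : lget i = lp[i] := by
        simp only [hlget]; exact List.getD_eq_getElem lp dflt hi
      simp only [hPi, List.take_succ, h1, Option.toList_some, List.map_append,
        List.prod_append, List.map_cons, List.map_nil, List.prod_cons, List.prod_nil,
        mul_one, h2]
    have hP0 : Pi 0 = 1 := by simp [hPi]
    have hPn : Pi n = (lp.map Prod.snd).prod := by
      simp only [hPi, hnl, List.take_length]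
    have hPK : ∀ i, Pi i ∈ K := by
      intro i
      apply Subgroup.list_prod_mem
      intro x hx
      obtain ⟨e, he, rfl⟩ := List.mem_map.mp hx
      have heR := hval e (List.take_subset i lp he)
      exact hKmem e.1 heR.1 heR.2.1 e.2 heR.2.2
    set u : ℕ → X := fun k =>
      if k = 0 then z else if k ≤ n then Pi (k - 1) • (lget (k - 1)).1.2 else Pi n • z'
      with hu
    have hu0 : u 0 = z := by simp [hu]
    have huk : ∀ k, 1 ≤ k → k ≤ n → u k = Pi (k - 1) • (lget (k - 1)).1.2 := by
      intro k h1 h2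
      simp only [hu]
      rw [if_neg (by omega), if_pos h2]
    have hular : ∀ k, n < k → u k = Pi n • z' := by
      intro k h1
      simp only [hu]
      rw [if_neg (by omega), if_neg (by omega)]
    have hang : ∀ k, 1 ≤ k → k + 1 ≤ n + 1 → gp (u k) (u (k - 1)) (u (k + 1)) ≤ 110 * δ := by
      intro k hk1 hk2
      have hkn : k ≤ n := by omega
      have hiv := hval (lget (k - 1)) (hget (k - 1) (by omega))
      have huk' : u k = Pi (k - 1) • (lget (k - 1)).1.2 := huk k hk1 hkn
      obtain ⟨s1, hs1S, hs1⟩ : ∃ s1 ∈ S, u (k - 1) = Pi (k - 1) • s1 := by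
        by_cases hk1' : k = 1
        · refine ⟨z, hz, ?_⟩
          rw [hk1']
          simp only [Nat.sub_self, hu0, hP0, one_smul]
        · have hiv2 := hval (lget (k - 2)) (hget (k - 2) (by omega))
          refine ⟨(lget (k - 2)).1.2, hAS hiv2.2.1, ?_⟩
          have hthis := huk (k - 1) (by omega) (by omega)
          have e1 : k - 1 - 1 = k - 2 := by omega
          rw [e1] at hthis
          rw [hthis]
          have hps := hPstep (k - 2) (by omega)
          have e2 : k - 2 + 1 = k - 1 := by omega
          rw [e2] at hps
          rw [hps, mul_smul]
          congr 1
          exact (hfix (lget (k - 2)).1 hiv2.1 (lget (k - 2)).2 hiv2.2.2).symm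
      obtain ⟨s2, hs2S, hs2⟩ : ∃ s2 ∈ S, u (k + 1) = (Pi (k - 1) * (lget (k - 1)).2) • s2 := by
        have hps := hPstep (k - 1) (by omega)
        have e2 : k - 1 + 1 = k := by omega
        rw [e2] at hps
        by_cases hkn' : k = n
        · refine ⟨z', hz', ?_⟩
          rw [hular (k + 1) (by omega), ← hps, hkn']
        · have hiv3 := hval (lget k) (hget k (by omega))
          refine ⟨(lget k).1.2, hAS hiv3.2.1, ?_⟩
          rw [huk (k + 1) (by omega) (by omega)]
          simp only [Nat.add_sub_cancel]
          rw [hps]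
      rw [huk', hs1, hs2, mul_smul, hgs]
      exact hW3S (lget (k - 1)).1 hiv.1 hiv.2.1 (lget (k - 1)).2 hiv.2.2
        (hred _ (hget (k - 1) (by omega))) s1 hs1S s2 hs2S
    have hlen : ∀ k, 1 ≤ k → k + 2 ≤ n + 1 → σ ≤ dist (u k) (u (k + 1)) := by
      intro k hk1 hk2
      have hva := hval (lget (k - 1)) (hget (k - 1) (by omega))
      have hvb := hval (lget k) (hget k (by omega))
      have hch2 : (lget (k - 1)).1 ≠ (lget k).1 := by
        have hcc := hchain' (k - 1) (by omega)
        have e : k - 1 + 1 = k := by omega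
        rwa [e] at hcc
      have hps := hPstep (k - 1) (by omega)
      have e2 : k - 1 + 1 = k := by omega
      rw [e2] at hps
      rw [huk k hk1 (by omega), huk (k + 1) (by omega) (by omega)]
      simp only [Nat.add_sub_cancel]
      rw [hps, mul_smul, hds]
      rw [← hfix (lget (k - 1)).1 hva.1 (lget (k - 1)).2 hva.2.2]
      rw [hds]
      exact hR2 (lget (k - 1)).1 hva.1 (lget k).1 hvb.1 hch2
    obtain ⟨k, hk, hbound⟩ := chain_lemma hδ hyp (by positivity : (0:ℝ) ≤ 110 * δ)
      (show 2 * (110 * δ) + 10 * δ ≤ σ by linarith) (n + 1) (by omega) u hang hlen x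
    have hun1 : u (n + 1) = (lp.map Prod.snd).prod • z' := by
      rw [hular (n + 1) (by omega), hPn]
    rw [hu0, hun1] at hbound
    have hfin : infDist x T ≤ gp x (u k) (u (k + 1)) + 7 * δ := by
      by_cases hk0 : k = 0
      · subst hk0
        have hu1 : u 1 = (lget 0).1.2 := by
          have h1 := huk 1 (le_refl 1) (by omega)
          simp only [Nat.sub_self] at h1
          rw [h1, hP0, one_smul]
        refine hstep 1 (one_mem K) (u 0) (u 1) ?_ ?_ x
        · rw [one_smul, hu0]; exact hz
        · rw [one_smul, hu1]
          exact hAS (hval (lget 0) (hget 0 (by omega))).2.1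
      · have hk1' : 1 ≤ k := by omega
        have hkn : k ≤ n := by omega
        have hva := hval (lget (k - 1)) (hget (k - 1) (by omega))
        have hps := hPstep (k - 1) (by omega)
        have e2 : k - 1 + 1 = k := by omega
        rw [e2] at hps
        refine hstep (Pi k)⁻¹ (inv_mem (hPK k)) (u k) (u (k + 1)) ?_ ?_ x
        · rw [huk k hk1' hkn, hps, mul_inv_rev, mul_smul, inv_smul_smul]
          rw [hfix (lget (k - 1)).1 hva.1 ((lget (k - 1)).2)⁻¹ (inv_mem hva.2.2)]
          exact hAS hva.2.1
        · by_cases hkn' : k = n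
          · rw [hular (k + 1) (by omega), ← hkn', inv_smul_smul]
            exact hz'
          · have hvb := hval (lget k) (hget k (by omega))
            rw [huk (k + 1) (by omega) (by omega)]
            simp only [Nat.add_sub_cancel]
            rw [inv_smul_smul]
            exact hAS hvb.2.1
    linarith
  -- the main inequality
  have hMAIN : ∀ g ∈ K, ∀ z ∈ S, ∀ z' ∈ S, ∀ x : X,
      infDist x T ≤ gp x z (g • z') + 224 * δ := by
    intro g hg z hz z' hz' x
    obtain ⟨l, hl, hlp⟩ := hLIST g hg
    obtain ⟨lp, hval, hprod⟩ := hTAG l hl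
    obtain ⟨lq, hq1, hq2, hq3, hq4⟩ := hNORM lp hval
    have h := hREDMAIN lq hq1 hq2 hq3 z hz z' hz' x
    rwa [hq4, hprod, hlp] at h
  have hQC : QConvex (224 * δ) T := by
    intro x pt hpt pt' hpt'
    obtain ⟨g, hg, ζ, hζ, rfl⟩ := hpt
    obtain ⟨g', hg', ζ', hζ', rfl⟩ := hpt'
    have h2 := hgs g⁻¹ x (g • ζ) (g' • ζ')
    rw [inv_smul_smul, ← mul_smul] at h2
    rw [← h2, ← hinfT g⁻¹ (inv_mem hg) x]
    exact hMAIN (g⁻¹ * g') (mul_mem (inv_mem hg) hg') ζ hζ ζ' hζ' (g⁻¹ • x)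
  refine ⟨hQC, ?_⟩
  -- W' is 2δ-quasi-convex
  intro x y hy y' hy'
  rw [hW'] at hy hy'
  simp only [nbhd, Set.mem_setOf_eq] at hy hy'
  by_cases hx : infDist x T ≤ σ / 10
  · have hxW' : x ∈ W' := by rw [hW']; exact hx
    rw [infDist_zero_of_mem hxW']
    have := gp_nonneg x y y'
    linarith
  · push_neg at hx
    apply le_of_forall_pos_le_add
    intro η hη
    set η' := min (η / 3) δ with hη'
    have hη'0 : 0 < η' := lt_min (by linarith) hδ
    have hη'δ : η' ≤ δ := min_le_right _ _
    have hη'η : η' ≤ η / 3 := min_le_left _ _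
    obtain ⟨t, htT, hyt⟩ := (infDist_lt_iff hTne).mp
      (lt_of_le_of_lt hy (by linarith : σ / 10 < σ / 10 + η'))
    obtain ⟨t', ht'T, hyt'⟩ := (infDist_lt_iff hTne).mp
      (lt_of_le_of_lt hy' (by linarith : σ / 10 < σ / 10 + η'))
    have h1 : infDist x T - (σ / 10 + η') ≤ gp x y t := by
      have a1 := gp_ge x t y
      have a2 : gp x t y = gp x y t := gp_comm x t y
      have a3 := infDist_le_dist_of_mem (x := x) htT
      have a4 : dist t y = dist y t := dist_comm t y
      linarith
    have h2 : infDist x T - (σ / 10 + η') ≤ gp x t' y' := by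
      have a1 := gp_ge x t' y'
      have a3 := infDist_le_dist_of_mem (x := x) ht'T
      have a4 : dist t' y' = dist y' t' := dist_comm t' y'
      linarith
    have h3 : infDist x T - 224 * δ ≤ gp x t t' := by
      have := hQC x t htT t' ht'T
      linarith
    have h4 : min (gp x t t') (gp x t' y') - δ ≤ gp x t y' := hyp t t' y' x
    have h5 : min (gp x y t) (gp x t y') - δ ≤ gp x y y' := hyp y t y' x
    have hty' : infDist x T - (σ / 10 + η') - δ ≤ gp x t y' := by
      rcases min_cases (gp x t t') (gp x t' y') with ⟨hm, _⟩ | ⟨hm, _⟩ <;> rw [hm] at h4 <;>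
        linarith
    have hyy' : infDist x T - (σ / 10 + η') - 2 * δ ≤ gp x y y' := by
      rcases min_cases (gp x y t) (gp x t y') with ⟨hm, _⟩ | ⟨hm, _⟩ <;> rw [hm] at h5 <;>
        linarith
    obtain ⟨t0, ht0T, hxt0⟩ := (infDist_lt_iff hTne).mp
      (show infDist x T < infDist x T + η' by linarith)
    obtain ⟨a, b, γ, hab, hγ, hγa, hγb⟩ := qgs x t0 η' hη'0
    set s := max a (b - σ / 10) with hs
    have hs1 : a ≤ s := le_max_left _ _
    have hs2 : s ≤ b := max_le hab (by linarith)
    have hsmem : s ∈ Set.Icc a b := ⟨hs1, hs2⟩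
    have hamem : a ∈ Set.Icc a b := ⟨le_refl a, hab⟩
    have hbmem : b ∈ Set.Icc a b := ⟨hab, le_refl b⟩
    have hbs : b - s ≤ σ / 10 := by
      have := le_max_right a (b - σ / 10)
      rw [← hs] at this
      linarith
    have hwt0 : dist (γ s) t0 ≤ σ / 10 := by
      have hq := (hγ s hsmem b hbmem).1
      rw [abs_of_nonpos (by linarith), neg_sub, hγb] at hq
      linarith
    have hwW' : γ s ∈ W' := by
      rw [hW']
      show infDist (γ s) T ≤ σ / 10
      exact le_trans (infDist_le_dist_of_mem ht0T) hwt0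
    have hxt0' : σ / 10 < dist x t0 := lt_of_lt_of_le hx (infDist_le_dist_of_mem ht0T)
    have hsa : s - a ≤ dist x t0 + η' - σ / 10 := by
      rcases max_cases a (b - σ / 10) with ⟨hm, hm2⟩ | ⟨hm, hm2⟩
      · rw [hs, hm]; linarith
      · have hq := (hγ a hamem b hbmem).2
        rw [abs_of_nonpos (by linarith), neg_sub, hγa, hγb] at hq
        rw [hs, hm]; linarith
    have hxw : dist x (γ s) ≤ dist x t0 + η' - σ / 10 := by
      have hq := (hγ a hamem s hsmem).1
      rw [abs_of_nonpos (by linarith), neg_sub, hγa] at hq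
      linarith
    calc infDist x W' ≤ dist x (γ s) := infDist_le_dist_of_mem hwW'
      _ ≤ dist x t0 + η' - σ / 10 := hxw
      _ ≤ (infDist x T + η') + η' - σ / 10 := by linarith
      _ ≤ (gp x y y' + (σ / 10 + η') + 2 * δ + η') + η' - σ / 10 := by linarith
      _ = gp x y y' + 2 * δ + 3 * η' := by ring
      _ ≤ gp x y y' + 2 * δ + η := by linarith
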